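/- The Demazure operators T_i on ℂ[x₁,...,x_n], defined by T_i(f) = (f - s_i(f))/(x_i - x_{i+1}) where s_i swaps x_i and x_{i+1}, satisfy the braid relation T_i T_{i+1} T_i = T_{i+1} T_i T_{i+1} and commute when |i - j| > 1. -/

import Mathlib

open MvPolynomial

private lemma ren_mul (σ τ : Equiv.Perm ℕ) (f : MvPolynomial ℕ ℂ) :
    rename σ (rename τ f) = rename (⇑(σ * τ)) f := by
  rw [rename_rename, Equiv.Perm.coe_mul]

private lemma ren_one (f : MvPolynomial ℕ ℂ) : rename (⇑(1 : Equiv.Perm ℕ)) f = f := by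
  rw [Equiv.Perm.coe_one, rename_id]; rfl

private lemma Xsub_ne {i j : ℕ} (h : i ≠ j) : (X i - X j : MvPolynomial ℕ ℂ) ≠ 0 :=
  sub_ne_zero.mpr (fun he => h (X_injective he))

private lemma swap_braid (i : ℕ) :
    Equiv.swap i (i+1) * Equiv.swap (i+1) (i+2) * Equiv.swap i (i+1)
      = Equiv.swap (i+1) (i+2) * Equiv.swap i (i+1) * Equiv.swap (i+1) (i+2) := by
  have h1 : Equiv.swap i (i+1) * Equiv.swap (i+1) (i+2) * (Equiv.swap i (i+1))⁻¹
      = Equiv.swap i (i+2) := by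
    rw [← Equiv.swap_apply_apply]
    rw [Equiv.swap_apply_right, Equiv.swap_apply_of_ne_of_ne (by omega) (by omega)]
  have h2 : Equiv.swap (i+1) (i+2) * Equiv.swap i (i+1) * (Equiv.swap (i+1) (i+2))⁻¹
      = Equiv.swap i (i+2) := by
    rw [← Equiv.swap_apply_apply]
    rw [Equiv.swap_apply_of_ne_of_ne (by omega) (by omega), Equiv.swap_apply_left]
  rw [Equiv.swap_inv] at h1 h2
  calc _ = Equiv.swap i (i+2) := h1
    _ = _ := h2.symm

private lemma TInv (T : ℕ → (MvPolynomial ℕ ℂ →ₗ[ℂ] MvPolynomial ℕ ℂ))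
    (hT : ∀ (i : ℕ) (f : MvPolynomial ℕ ℂ),
      (X i - X (i + 1)) * T i f = f - rename (Equiv.swap i (i + 1)) f)
    (j : ℕ) (g : MvPolynomial ℕ ℂ) :
    rename (Equiv.swap j (j+1)) (T j g) = T j g := by
  have hne : (X j - X (j+1) : MvPolynomial ℕ ℂ) ≠ 0 := Xsub_ne (by omega)
  apply mul_left_cancel₀ hne
  have h : rename (Equiv.swap j (j+1)) ((X j - X (j+1)) * T j g)
      = rename (Equiv.swap j (j+1)) (g - rename (Equiv.swap j (j+1)) g) := by rw [hT]
  simp only [map_mul, map_sub, rename_X, Equiv.swap_apply_left, Equiv.swap_apply_right,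
    ren_mul, Equiv.swap_mul_self, ren_one] at h
  linear_combination -h - hT j g

private lemma TComm (T : ℕ → (MvPolynomial ℕ ℂ →ₗ[ℂ] MvPolynomial ℕ ℂ))
    (hT : ∀ (i : ℕ) (f : MvPolynomial ℕ ℂ),
      (X i - X (i + 1)) * T i f = f - rename (Equiv.swap i (i + 1)) f)
    (i j : ℕ) (hij : i + 1 < j ∨ j + 1 < i) (f : MvPolynomial ℕ ℂ) :
    T i (T j f) = T j (T i f) := by
  have hdis : (Equiv.swap i (i+1)).Disjoint (Equiv.swap j (j+1)) := by
    intro x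
    rcases eq_or_ne x i with rfl | hxi
    · exact Or.inr (Equiv.swap_apply_of_ne_of_ne (by omega) (by omega))
    rcases eq_or_ne x (i+1) with rfl | hxi1
    · exact Or.inr (Equiv.swap_apply_of_ne_of_ne (by omega) (by omega))
    · exact Or.inl (Equiv.swap_apply_of_ne_of_ne hxi hxi1)
  have hcom : Equiv.swap i (i+1) * Equiv.swap j (j+1)
      = Equiv.swap j (j+1) * Equiv.swap i (i+1) := hdis.commute.eq
  have hdj : (X j - X (j+1) : MvPolynomial ℕ ℂ) ≠ 0 := Xsub_ne (by omega)
  have hcomm : rename (Equiv.swap i (i+1)) (rename (Equiv.swap j (j+1)) f)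
      = rename (Equiv.swap j (j+1)) (rename (Equiv.swap i (i+1)) f) := by
    rw [ren_mul, ren_mul, hcom]
  -- s_i commutes past T_j
  have step1 : rename (Equiv.swap i (i+1)) (T j f) = T j (rename (Equiv.swap i (i+1)) f) := by
    apply mul_left_cancel₀ hdj
    have h : rename (Equiv.swap i (i+1)) ((X j - X (j+1)) * T j f)
        = rename (Equiv.swap i (i+1)) (f - rename (Equiv.swap j (j+1)) f) := by rw [hT]
    simp only [map_mul, map_sub, rename_X,
      Equiv.swap_apply_of_ne_of_ne (show j ≠ i by omega) (show j ≠ i+1 by omega),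
      Equiv.swap_apply_of_ne_of_ne (show j+1 ≠ i by omega) (show j+1 ≠ i+1 by omega),
      hcomm] at h
    rw [h, hT j (rename (Equiv.swap i (i+1)) f)]
  -- T_j is linear over the s_j-invariant factor (X i - X (i+1))
  have step2 : ∀ g : MvPolynomial ℕ ℂ,
      T j ((X i - X (i+1)) * g) = (X i - X (i+1)) * T j g := by
    intro g
    apply mul_left_cancel₀ hdj
    have h1 := hT j ((X i - X (i+1)) * g)
    have h2 := hT j g
    simp only [map_mul, map_sub, rename_X,
      Equiv.swap_apply_of_ne_of_ne (show i ≠ j by omega) (show i ≠ j+1 by omega),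
      Equiv.swap_apply_of_ne_of_ne (show i+1 ≠ j by omega) (show i+1 ≠ j+1 by omega)] at h1
    linear_combination h1 - (X i - X (i+1)) * h2
  have hdi : (X i - X (i+1) : MvPolynomial ℕ ℂ) ≠ 0 := Xsub_ne (by omega)
  apply mul_left_cancel₀ hdi
  calc (X i - X (i+1)) * T i (T j f)
      = T j f - T j (rename (Equiv.swap i (i+1)) f) := by rw [hT i (T j f), step1]
    _ = T j (f - rename (Equiv.swap i (i+1)) f) := (map_sub (T j) _ _).symm
    _ = T j ((X i - X (i+1)) * T i f) := by rw [hT i f]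
    _ = (X i - X (i+1)) * T j (T i f) := step2 (T i f)

/-- The Demazure operators `T_i` on `ℂ[x₀,x₁,…]`, characterized by
`(x_i - x_{i+1})·T_i(f) = f - s_i(f)` where `s_i` swaps `x_i` and `x_{i+1}`,
satisfy the braid relation `T_i T_{i+1} T_i = T_{i+1} T_i T_{i+1}` and commute
when `|i - j| > 1`. -/
theorem demazure_braid_relations
    (T : ℕ → (MvPolynomial ℕ ℂ →ₗ[ℂ] MvPolynomial ℕ ℂ))
    (hT : ∀ (i : ℕ) (f : MvPolynomial ℕ ℂ),
      (X i - X (i + 1)) * T i f = f - rename (Equiv.swap i (i + 1)) f) :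
    (∀ (i : ℕ) (f : MvPolynomial ℕ ℂ),
      T i (T (i + 1) (T i f)) = T (i + 1) (T i (T (i + 1) f))) ∧
    (∀ (i j : ℕ), (i + 1 < j ∨ j + 1 < i) →
      ∀ f : MvPolynomial ℕ ℂ, T i (T j f) = T j (T i f)) := by
  constructor
  · intro i f
    -- notation for the two swaps
    have hs0 : rename (Equiv.swap i (i+1)) (X i : MvPolynomial ℕ ℂ) = X (i+1) := by
      rw [rename_X, Equiv.swap_apply_left]
    have hs1 : rename (Equiv.swap i (i+1)) (X (i+1) : MvPolynomial ℕ ℂ) = X i := by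
      rw [rename_X, Equiv.swap_apply_right]
    have hs2 : rename (Equiv.swap i (i+1)) (X (i+2) : MvPolynomial ℕ ℂ) = X (i+2) := by
      rw [rename_X, Equiv.swap_apply_of_ne_of_ne (by omega) (by omega)]
    have ht0 : rename (Equiv.swap (i+1) (i+2)) (X i : MvPolynomial ℕ ℂ) = X i := by
      rw [rename_X, Equiv.swap_apply_of_ne_of_ne (by omega) (by omega)]
    have ht1 : rename (Equiv.swap (i+1) (i+2)) (X (i+1) : MvPolynomial ℕ ℂ) = X (i+2) := by
      rw [rename_X, Equiv.swap_apply_left]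
    have ht2 : rename (Equiv.swap (i+1) (i+2)) (X (i+2) : MvPolynomial ℕ ℂ) = X (i+1) := by
      rw [rename_X, Equiv.swap_apply_right]
    have sA0 : rename (Equiv.swap i (i+1)) (T i f) = T i f := TInv T hT i f
    have tB0 : rename (Equiv.swap (i+1) (i+2)) (T (i+1) f) = T (i+1) f := by
      have := TInv T hT (i+1) f
      simpa using this
    -- the six equations for the left-hand side
    have E0 := hT i f
    have E1 := hT (i+1) (T i f)
    have E2 := hT i (T (i+1) (T i f))
    have SE1 : (X i - X (i+2)) * rename (Equiv.swap i (i+1)) (T (i+1) (T i f))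
        = T i f - rename (Equiv.swap i (i+1)) (rename (Equiv.swap (i+1) (i+2)) (T i f)) := by
      have h : rename (Equiv.swap i (i+1)) ((X (i+1) - X (i+2)) * T (i+1) (T i f))
          = rename (Equiv.swap i (i+1))
              (T i f - rename (Equiv.swap (i+1) (i+2)) (T i f)) := by
        rw [hT (i+1) (T i f)]
      simpa only [map_mul, map_sub, hs1, hs2, sA0] using h
    have TE0 : (X i - X (i+2)) * rename (Equiv.swap (i+1) (i+2)) (T i f)
        = rename (Equiv.swap (i+1) (i+2)) f
          - rename (Equiv.swap (i+1) (i+2)) (rename (Equiv.swap i (i+1)) f) := by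
      have h : rename (Equiv.swap (i+1) (i+2)) ((X i - X (i+1)) * T i f)
          = rename (Equiv.swap (i+1) (i+2)) (f - rename (Equiv.swap i (i+1)) f) := by
        rw [hT i f]
      simpa only [map_mul, map_sub, ht0, ht1] using h
    have STE0 : (X (i+1) - X (i+2))
          * rename (Equiv.swap i (i+1)) (rename (Equiv.swap (i+1) (i+2)) (T i f))
        = rename (Equiv.swap i (i+1)) (rename (Equiv.swap (i+1) (i+2)) f)
          - rename (Equiv.swap i (i+1)) (rename (Equiv.swap (i+1) (i+2))
              (rename (Equiv.swap i (i+1)) f)) := by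
      have h := congrArg (fun p => rename (Equiv.swap i (i+1)) p) TE0
      simpa only [map_mul, map_sub, hs0, hs2] using h
    -- the six equations for the right-hand side
    have F0 := hT (i+1) f
    have F1 := hT i (T (i+1) f)
    have F2 := hT (i+1) (T i (T (i+1) f))
    have TF1 : (X i - X (i+2)) * rename (Equiv.swap (i+1) (i+2)) (T i (T (i+1) f))
        = T (i+1) f
          - rename (Equiv.swap (i+1) (i+2)) (rename (Equiv.swap i (i+1)) (T (i+1) f)) := by
      have h : rename (Equiv.swap (i+1) (i+2)) ((X i - X (i+1)) * T i (T (i+1) f))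
          = rename (Equiv.swap (i+1) (i+2))
              (T (i+1) f - rename (Equiv.swap i (i+1)) (T (i+1) f)) := by
        rw [hT i (T (i+1) f)]
      simpa only [map_mul, map_sub, ht0, ht1, tB0] using h
    have SF0 : (X i - X (i+2)) * rename (Equiv.swap i (i+1)) (T (i+1) f)
        = rename (Equiv.swap i (i+1)) f
          - rename (Equiv.swap i (i+1)) (rename (Equiv.swap (i+1) (i+2)) f) := by
      have h : rename (Equiv.swap i (i+1)) ((X (i+1) - X (i+2)) * T (i+1) f)
          = rename (Equiv.swap i (i+1)) (f - rename (Equiv.swap (i+1) (i+2)) f) := by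
        rw [hT (i+1) f]
      simpa only [map_mul, map_sub, hs1, hs2] using h
    have TSF0 : (X i - X (i+1))
          * rename (Equiv.swap (i+1) (i+2)) (rename (Equiv.swap i (i+1)) (T (i+1) f))
        = rename (Equiv.swap (i+1) (i+2)) (rename (Equiv.swap i (i+1)) f)
          - rename (Equiv.swap (i+1) (i+2)) (rename (Equiv.swap i (i+1))
              (rename (Equiv.swap (i+1) (i+2)) f)) := by
      have h := congrArg (fun p => rename (Equiv.swap (i+1) (i+2)) p) SF0
      simpa only [map_mul, map_sub, ht0, ht2] using h
    -- the braid relation for the swaps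
    have hW : rename (Equiv.swap i (i+1)) (rename (Equiv.swap (i+1) (i+2))
            (rename (Equiv.swap i (i+1)) f))
        = rename (Equiv.swap (i+1) (i+2)) (rename (Equiv.swap i (i+1))
            (rename (Equiv.swap (i+1) (i+2)) f)) := by
      rw [ren_mul, ren_mul, ren_mul, ren_mul, swap_braid]
    -- cancel a²b²c²
    have hM : ((X i - X (i+1))^2 * (X (i+1) - X (i+2))^2 * (X i - X (i+2))^2 :
        MvPolynomial ℕ ℂ) ≠ 0 :=
      mul_ne_zero (mul_ne_zero (pow_ne_zero _ (Xsub_ne (by omega)))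
        (pow_ne_zero _ (Xsub_ne (by omega)))) (pow_ne_zero _ (Xsub_ne (by omega)))
    apply mul_left_cancel₀ hM
    linear_combination
      ((X i - X (i+1)) * (X (i+1) - X (i+2))^2 * (X i - X (i+2))^2) * E2
      + ((X i - X (i+1)) * (X (i+1) - X (i+2)) * (X i - X (i+2))^2) * E1
      - ((X i - X (i+1)) * (X (i+1) - X (i+2))^2 * (X i - X (i+2))) * SE1
      + ((X (i+1) - X (i+2)) * (X i - X (i+2))^2
          - (X (i+1) - X (i+2))^2 * (X i - X (i+2))) * E0
      - ((X i - X (i+1)) * (X (i+1) - X (i+2)) * (X i - X (i+2))) * TE0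
      + ((X i - X (i+1)) * (X (i+1) - X (i+2)) * (X i - X (i+2))) * STE0
      - ((X (i+1) - X (i+2)) * (X i - X (i+1))^2 * (X i - X (i+2))^2) * F2
      - ((X i - X (i+1)) * (X (i+1) - X (i+2)) * (X i - X (i+2))^2) * F1
      + ((X i - X (i+1))^2 * (X (i+1) - X (i+2)) * (X i - X (i+2))) * TF1
      - ((X i - X (i+1)) * (X i - X (i+2))^2
          - (X i - X (i+1))^2 * (X i - X (i+2))) * F0
      + ((X i - X (i+1)) * (X (i+1) - X (i+2)) * (X i - X (i+2))) * SF0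
      - ((X i - X (i+1)) * (X (i+1) - X (i+2)) * (X i - X (i+2))) * TSF0
      - ((X i - X (i+1)) * (X (i+1) - X (i+2)) * (X i - X (i+2))) * hW
  · intro i j hij f
    exact TComm T hT i j hij f
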